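/- Let w₀, …, w_K be nonnegative real numbers, X₀, …, X_K ∈ ℝⁿ, Y₀, …, Y_K ∈ ℝᵐ, let Q be a real symmetric positive semidefinite n×n matrix and R a real symmetric positive definite m×m matrix. Define Pᵇ = ∑ᵢ wᵢ Xᵢ Xᵢᵀ + Q, P_xy = ∑ᵢ wᵢ Xᵢ Yᵢᵀ, P_yy = ∑ᵢ wᵢ Yᵢ Yᵢᵀ + R, and K = P_xy P_yy^{-1}. Then the analysis covariance Pᵃ = Pᵇ − K (P_xy)ᵀ is symmetric positive semidefinite. -/

import Mathlib

open Matrix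

section UKFAux

variable {p : Type*} [Fintype p] {ι : Type*}

private lemma ukf_vecMulVec_mulVec (a x : p → ℝ) :
    Matrix.vecMulVec a a *ᵥ x = (a ⬝ᵥ x) • a := by
  ext i
  simp only [Matrix.mulVec, dotProduct, Matrix.vecMulVec_apply, Pi.smul_apply,
    smul_eq_mul, Finset.sum_mul]
  exact Finset.sum_congr rfl fun j _ => by ring

private lemma ukf_quad_vecMulVec (a x : p → ℝ) :
    x ⬝ᵥ (Matrix.vecMulVec a a *ᵥ x) = (a ⬝ᵥ x) ^ 2 := by
  rw [ukf_vecMulVec_mulVec, dotProduct_smul, smul_eq_mul, dotProduct_comm, sq]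

omit [Fintype p] in
private lemma ukf_smul_vecMulVec_isHermitian (c : ℝ) (a : p → ℝ) :
    (c • Matrix.vecMulVec a a).IsHermitian := by
  apply Matrix.IsHermitian.ext
  intro i j
  simp [Matrix.vecMulVec_apply, mul_comm]

private lemma ukf_sum_quad (s : Finset ι) (w : ι → ℝ) (hw : ∀ i, 0 ≤ w i)
    (z : ι → p → ℝ) (x : p → ℝ) :
    0 ≤ x ⬝ᵥ ((∑ i ∈ s, w i • Matrix.vecMulVec (z i) (z i)) *ᵥ x) := by
  refine Finset.sum_induction _ (fun M => 0 ≤ x ⬝ᵥ (M *ᵥ x)) ?_ ?_ ?_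
  · intro A B hA hB
    rw [Matrix.add_mulVec, dotProduct_add]
    exact add_nonneg hA hB
  · simp
  · intro i _
    rw [Matrix.smul_mulVec, dotProduct_smul, smul_eq_mul, ukf_quad_vecMulVec]
    exact mul_nonneg (hw i) (sq_nonneg _)

omit [Fintype p] in
private lemma ukf_sum_isHermitian (s : Finset ι) (w : ι → ℝ) (z : ι → p → ℝ) :
    (∑ i ∈ s, w i • Matrix.vecMulVec (z i) (z i)).IsHermitian :=
  Finset.sum_induction _ _ (fun _ _ hA hB => hA.add hB) Matrix.isHermitian_zero
    (fun i _ => ukf_smul_vecMulVec_isHermitian (w i) (z i))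

private lemma ukf_sum_add_posSemidef (s : Finset ι) (w : ι → ℝ) (hw : ∀ i, 0 ≤ w i)
    (z : ι → p → ℝ) (S : Matrix p p ℝ) (hS : S.PosSemidef) :
    ((∑ i ∈ s, w i • Matrix.vecMulVec (z i) (z i)) + S).PosSemidef := by
  refine Matrix.posSemidef_iff_dotProduct_mulVec.mpr ⟨(ukf_sum_isHermitian s w z).add hS.1, fun x => ?_⟩
  rw [Matrix.add_mulVec, dotProduct_add]
  simpa using add_nonneg (ukf_sum_quad s w hw z (star x)) ((Matrix.posSemidef_iff_dotProduct_mulVec.mp hS).2 x)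

private lemma ukf_sum_add_posDef (s : Finset ι) (w : ι → ℝ) (hw : ∀ i, 0 ≤ w i)
    (z : ι → p → ℝ) (S : Matrix p p ℝ) (hS : S.PosDef) :
    ((∑ i ∈ s, w i • Matrix.vecMulVec (z i) (z i)) + S).PosDef := by
  refine Matrix.posDef_iff_dotProduct_mulVec.mpr ⟨(ukf_sum_isHermitian s w z).add hS.1, fun x hx => ?_⟩
  rw [Matrix.add_mulVec, dotProduct_add]
  simpa using add_pos_of_nonneg_of_pos (ukf_sum_quad s w hw z (star x)) ((Matrix.posDef_iff_dotProduct_mulVec.mp hS).2 hx)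

end UKFAux

/-- In the UKF analysis step, the updated covariance
`Pᵃ = Pᵇ − K (P_xy)ᵀ` with `K = P_xy P_yy⁻¹` is symmetric positive
semidefinite. -/
theorem ukf_analysis_covariance_posSemidef
    (m n K : ℕ) (w : Fin (K + 1) → ℝ) (hw : ∀ i, 0 ≤ w i)
    (X : Fin (K + 1) → (Fin n → ℝ)) (Y : Fin (K + 1) → (Fin m → ℝ))
    (Q : Matrix (Fin n) (Fin n) ℝ) (hQ : Q.PosSemidef)
    (R : Matrix (Fin m) (Fin m) ℝ) (hR : R.PosDef) :
    let Pb : Matrix (Fin n) (Fin n) ℝ :=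
      (∑ i : Fin (K + 1), w i • Matrix.vecMulVec (X i) (X i)) + Q
    let Pxy : Matrix (Fin n) (Fin m) ℝ :=
      ∑ i : Fin (K + 1), w i • Matrix.vecMulVec (X i) (Y i)
    let Pyy : Matrix (Fin m) (Fin m) ℝ :=
      (∑ i : Fin (K + 1), w i • Matrix.vecMulVec (Y i) (Y i)) + R
    let Kg : Matrix (Fin n) (Fin m) ℝ := Pxy * Pyy⁻¹
    (Pb - Kg * Pxy.transpose).PosSemidef := by
  intro Pb Pxy Pyy Kg
  have hPyy : Pyy.PosDef := ukf_sum_add_posDef Finset.univ w hw Y R hR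
  haveI : Invertible Pyy := hPyy.isUnit.invertible
  have hblock : (Matrix.fromBlocks Pb Pxy Pxyᴴ Pyy).PosSemidef := by
    have heq : Matrix.fromBlocks Pb Pxy Pxyᴴ Pyy =
        (∑ i : Fin (K + 1),
          w i • Matrix.vecMulVec (Sum.elim (X i) (Y i)) (Sum.elim (X i) (Y i))) +
          Matrix.fromBlocks Q 0 0 R := by
      ext (i | i) (j | j) <;>
        simp [Pb, Pxy, Pyy, Matrix.fromBlocks, Matrix.sum_apply, Matrix.vecMulVec_apply,
          Matrix.conjTranspose_apply, mul_comm]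
    rw [heq]
    refine ukf_sum_add_posSemidef _ _ hw _ _ ?_
    rw [Matrix.posSemidef_iff_dotProduct_mulVec]
    constructor
    · exact Matrix.IsHermitian.fromBlocks hQ.1 (by simp) hR.isHermitian
    · intro x
      have hx : x = Sum.elim (x ∘ Sum.inl) (x ∘ Sum.inr) := (Sum.elim_comp_inl_inr x).symm
      rw [hx, Matrix.fromBlocks_mulVec]
      simp only [Matrix.zero_mulVec, add_zero, zero_add, star_trivial]
      rw [sumElim_dotProduct_sumElim]
      simpa using add_nonneg ((Matrix.posSemidef_iff_dotProduct_mulVec.mp hQ).2 (x ∘ Sum.inl)) ((Matrix.posSemidef_iff_dotProduct_mulVec.mp hR.posSemidef).2 (x ∘ Sum.inr))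
  have hfinal := (Matrix.PosDef.fromBlocks₂₂ Pb Pxy hPyy).mp hblock
  have hct : Pxyᴴ = Pxy.transpose := Matrix.conjTranspose_eq_transpose_of_trivial Pxy
  rw [hct] at hfinal
  simpa [Kg, mul_assoc] using hfinal
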